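/- For all n ≥ 0, the number of Dumont permutations of the fourth kind of length 2n avoiding the pattern 1432 (equivalently, avoiding 321) equals the n-th Catalan number C_n = (1/(n+1))·binomial(2n, n). -/

import Mathlib

/-- `π` contains the pattern `q` (a length-`k` sequence of distinct values given
as a function `Fin k → Fin k`) if some subsequence of `π` is order-isomorphic to `q`. -/
def PatternContains {n k : ℕ} (π : Equiv.Perm (Fin n)) (q : Fin k → Fin k) : Prop :=
  ∃ f : Fin k → Fin n, StrictMono f ∧ ∀ a b : Fin k, q a < q b ↔ π (f a) < π (f b)

/-- `π` avoids the pattern `q`. -/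
def Avoids {n k : ℕ} (π : Equiv.Perm (Fin n)) (q : Fin k → Fin k) : Prop :=
  ¬ PatternContains π q

/-- A Dumont permutation of the fourth kind of size `2n` (0-based indexing:
position `i` and value `π i` correspond to 1-based position `i+1` and value `π i + 1`):
every deficiency occurs at an even (1-based) position and has an even (1-based) value. -/
def IsDumont4 (n : ℕ) (π : Equiv.Perm (Fin (2 * n))) : Prop :=
  ∀ i : Fin (2 * n), (π i : ℕ) < (i : ℕ) → Even ((i : ℕ) + 1) ∧ Even ((π i : ℕ) + 1)

def p1234 : Fin 4 → Fin 4 := ![0, 1, 2, 3]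
def p1342 : Fin 4 → Fin 4 := ![0, 2, 3, 1]
def p1432 : Fin 4 → Fin 4 := ![0, 3, 2, 1]
def p1324 : Fin 4 → Fin 4 := ![0, 2, 1, 3]
def p1243 : Fin 4 → Fin 4 := ![0, 1, 3, 2]
def p1423 : Fin 4 → Fin 4 := ![0, 3, 1, 2]
def p231 : Fin 3 → Fin 3 := ![1, 2, 0]
def p321 : Fin 3 → Fin 3 := ![2, 1, 0]
def p213 : Fin 3 → Fin 3 := ![1, 0, 2]
def p312 : Fin 3 → Fin 3 := ![2, 0, 1]


namespace D4
open Finset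

def cnt (f : ℕ → Bool) (k : ℕ) : ℕ := ((Finset.range k).filter (fun j => f j = true)).card

lemma cnt_succ (f : ℕ → Bool) (k : ℕ) : cnt f (k+1) = cnt f k + (if f k then 1 else 0) := by
  unfold cnt
  rw [Finset.range_add_one, Finset.filter_insert]
  split
  · rw [Finset.card_insert_of_notMem (by simp)]
  · rfl

lemma cnt_mono (f : ℕ → Bool) : Monotone (cnt f) := fun _ _ h =>
  Finset.card_le_card (Finset.filter_subset_filter _ (Finset.range_subset_range.2 h))

lemma cnt_le (f : ℕ → Bool) (k : ℕ) : cnt f k ≤ k := by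
  simpa [cnt] using Finset.card_le_card (Finset.filter_subset (fun j => f j = true) (Finset.range k))

variable {α : Type*} [LinearOrder α] [DecidableEq α]

lemma ord_lower {s : Finset α} {k : ℕ} (h : s.card = k) (m : Fin k) :
    (m : ℕ) + 1 ≤ (s.filter (· ≤ s.orderEmbOfFin h m)).card := by
  have himg : (Finset.Iic m).image (s.orderEmbOfFin h) ⊆ s.filter (· ≤ s.orderEmbOfFin h m) := by
    intro y hy
    obtain ⟨j, hj, rfl⟩ := Finset.mem_image.1 hy
    exact Finset.mem_filter.2 ⟨Finset.orderEmbOfFin_mem _ _ _,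
      (s.orderEmbOfFin h).monotone (Finset.mem_Iic.1 hj)⟩
  calc (m : ℕ) + 1 = (Finset.Iic m).card := by simp
    _ = ((Finset.Iic m).image (s.orderEmbOfFin h)).card :=
        (Finset.card_image_of_injective _ (s.orderEmbOfFin h).injective).symm
    _ ≤ _ := Finset.card_le_card himg

lemma ord_le {s : Finset α} {k : ℕ} (h : s.card = k) (m : Fin k) {x : α}
    (hc : (m : ℕ) < (s.filter (· ≤ x)).card) : s.orderEmbOfFin h m ≤ x := by
  by_contra hx
  push_neg at hx
  have hsub : s.filter (· ≤ x) ⊆ (Finset.Iio m).image (s.orderEmbOfFin h) := by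
    intro y hy
    obtain ⟨hys, hyx⟩ := Finset.mem_filter.1 hy
    obtain ⟨j, hj⟩ := Set.mem_range.1 (by rw [Finset.range_orderEmbOfFin]; exact hys :
      y ∈ Set.range (s.orderEmbOfFin h))
    refine Finset.mem_image.2 ⟨j, Finset.mem_Iio.2 ?_, hj⟩
    have : s.orderEmbOfFin h j < s.orderEmbOfFin h m := lt_of_le_of_lt (hj ▸ hyx) hx
    exact (s.orderEmbOfFin h).lt_iff_lt.1 this
  have := Finset.card_le_card hsub
  have h2 := Finset.card_image_le (s := Finset.Iio m) (f := s.orderEmbOfFin h)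
  simp at h2 ⊢
  omega

lemma ord_lt {s : Finset α} {k : ℕ} (h : s.card = k) (m : Fin k) {x : α}
    (hc : (m : ℕ) < (s.filter (· < x)).card) : s.orderEmbOfFin h m < x := by
  by_contra hx
  push_neg at hx
  have hsub : s.filter (· < x) ⊆ (Finset.Iio m).image (s.orderEmbOfFin h) := by
    intro y hy
    obtain ⟨hys, hyx⟩ := Finset.mem_filter.1 hy
    obtain ⟨j, hj⟩ := Set.mem_range.1 (by rw [Finset.range_orderEmbOfFin]; exact hys :
      y ∈ Set.range (s.orderEmbOfFin h))
    refine Finset.mem_image.2 ⟨j, Finset.mem_Iio.2 ?_, hj⟩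
    have : s.orderEmbOfFin h j < s.orderEmbOfFin h m := lt_of_lt_of_le (hj ▸ hyx) hx
    exact (s.orderEmbOfFin h).lt_iff_lt.1 this
  have := Finset.card_le_card hsub
  have h2 := Finset.card_image_le (s := Finset.Iio m) (f := s.orderEmbOfFin h)
  simp at h2 ⊢
  omega

end D4

namespace D4
open Finset

variable {N : ℕ} {π : Equiv.Perm (Fin N)}

/-- deficiency -/
def Defi (π : Equiv.Perm (Fin N)) (t : Fin N) : Prop := (π t : ℕ) < (t : ℕ)

lemma mk321 {r p q : Fin N} (hrp : r < p) (hpq : p < q)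
    (h1 : π p < π r) (h2 : π q < π p) : PatternContains π p321 := by
  refine ⟨![r, p, q], ?_, ?_⟩
  · intro a b hab
    fin_cases a <;> fin_cases b <;> simp_all <;> omega
  · intro a b
    fin_cases a <;> fin_cases b <;>
      simp [p321] <;> omega

lemma not321_of_classes
    (hd : ∀ p q : Fin N, p < q → Defi π p → Defi π q → π p < π q)
    (hw : ∀ p q : Fin N, p < q → ¬Defi π p → ¬Defi π q → π p < π q) :
    Avoids π p321 := by
  rintro ⟨f, hf, hiff⟩
  have h01 : π (f 1) < π (f 0) := by
    have := (hiff 1 0).1 (by decide)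
    exact this
  have h12 : π (f 2) < π (f 1) := by
    have := (hiff 2 1).1 (by decide)
    exact this
  have hf01 : f 0 < f 1 := hf (by omega)
  have hf12 : f 1 < f 2 := hf (by omega)
  by_cases hD : Defi π (f 1)
  · by_cases hD2 : Defi π (f 2)
    · exact absurd (hd _ _ hf12 hD hD2) (by simp; exact le_of_lt h12)
    · -- π (f 2) ≥ f 2 > f 1 > π (f 1) contradicts h12
      unfold Defi at hD2
      push_neg at hD2
      have : (f 1 : ℕ) < (π (f 1) : ℕ) := by
        have := Fin.lt_def.1 h12
        have := Fin.lt_def.1 hf12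
        omega
      exact absurd this (by unfold Defi at hD; omega)
  · have hD0 : ¬ Defi π (f 0) := by
      unfold Defi at hD ⊢
      push_neg at hD ⊢
      have := Fin.lt_def.1 h01
      have := Fin.lt_def.1 hf01
      omega
    exact absurd (hw _ _ hf01 hD0 hD) (by simp; exact le_of_lt h01)

end D4


namespace D4
open Finset

variable {N : ℕ} {π : Equiv.Perm (Fin N)}

lemma card_gt (x : Fin N) :
    (univ.filter fun r : Fin N => x < π r).card = N - 1 - (x : ℕ) := by
  have : (univ.filter fun r : Fin N => x < π r).card = (Finset.Ioi x).card := by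
    apply Finset.card_bij (fun r _ => π r)
    · intro r hr; simp at hr ⊢; exact hr
    · intro a _ b _ hab; exact π.injective hab
    · intro y hy; exact ⟨π.symm y, by simpa using hy, by simp⟩
  rw [this]
  simp [Fin.card_Ioi]

lemma card_lt (x : Fin N) :
    (univ.filter fun r : Fin N => π r < x).card = (x : ℕ) := by
  have : (univ.filter fun r : Fin N => π r < x).card = (Finset.Iio x).card := by
    apply Finset.card_bij (fun r _ => π r)
    · intro r hr; simp at hr ⊢; exact hr
    · intro a _ b _ hab; exact π.injective hab
    · intro y hy; exact ⟨π.symm y, by simpa using hy, by simp⟩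
  rw [this]
  simp

lemma def_mono (hA : Avoids π p321) {p q : Fin N} (hpq : p < q)
    (hp : Defi π p) (hq : Defi π q) : π p < π q := by
  rcases lt_or_ge (π p) (π q) with h | h
  · exact h
  have hne : π q < π p := by
    rcases lt_or_eq_of_le h with h' | h'
    · exact h'
    · exact absurd (π.injective h') (by intro e; rw [e] at hpq; exact lt_irrefl _ hpq)
  -- find r < p with π p < π r
  by_cases hr : ∃ r, r < p ∧ π p < π r
  · obtain ⟨r, h1, h2⟩ := hr
    exact absurd (mk321 h1 hpq h2 hne) hA
  push_neg at hr
  have hsub : (univ.filter fun r : Fin N => π p < π r) ⊆ (Finset.Ioi p).erase q := by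
    intro r hrm
    simp only [mem_filter, mem_univ, true_and] at hrm
    have h1 : ¬ r < p := fun hc => absurd hrm (not_lt.2 (hr r hc))
    have h2 : r ≠ p := by rintro rfl; exact lt_irrefl _ hrm
    have h3 : r ≠ q := by rintro rfl; exact absurd hrm (not_lt.2 (le_of_lt hne))
    refine Finset.mem_erase.2 ⟨h3, Finset.mem_Ioi.2 ?_⟩
    cases lt_or_eq_of_le (not_lt.1 h1) with
    | inl h => exact h
    | inr h => exact absurd h.symm h2
  have hcard := Finset.card_le_card hsub
  rw [card_gt] at hcard
  have hqIoi : q ∈ Finset.Ioi p := Finset.mem_Ioi.2 hpq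
  rw [Finset.card_erase_of_mem hqIoi] at hcard
  have : (Finset.Ioi p).card = N - 1 - (p : ℕ) := by simp [Fin.card_Ioi]
  rw [this] at hcard
  unfold Defi at hp hq
  have : (p : ℕ) < N := p.2
  have : (q : ℕ) < N := q.2
  have : (p : ℕ) < (q : ℕ) := hpq
  omega

lemma exc_mono (hA : Avoids π p321) {p q : Fin N} (hpq : p < q)
    (hp : ¬ Defi π p) (hq : ¬ Defi π q) : π p < π q := by
  rcases lt_or_ge (π p) (π q) with h | h
  · exact h
  have hne : π q < π p := by
    rcases lt_or_eq_of_le h with h' | h'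
    · exact h'
    · exact absurd (π.injective h') (by intro e; rw [e] at hpq; exact lt_irrefl _ hpq)
  by_cases hr : ∃ r, q < r ∧ π r < π q
  · obtain ⟨r, h1, h2⟩ := hr
    exact absurd (mk321 hpq h1 hne h2) hA
  push_neg at hr
  have hsub : (univ.filter fun r : Fin N => π r < π q) ⊆ (Finset.Iio q).erase p := by
    intro r hrm
    simp only [mem_filter, mem_univ, true_and] at hrm
    have h1 : ¬ q < r := fun hc => absurd hrm (not_lt.2 (hr r hc))
    have h2 : r ≠ q := by rintro rfl; exact lt_irrefl _ hrm
    have h3 : r ≠ p := by rintro rfl; exact absurd hrm (not_lt.2 (le_of_lt hne))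
    refine Finset.mem_erase.2 ⟨h3, Finset.mem_Iio.2 ?_⟩
    cases lt_or_eq_of_le (not_lt.1 h1) with
    | inl h => exact h
    | inr h => exact absurd h h2
  have hcard := Finset.card_le_card hsub
  rw [card_lt] at hcard
  have hpIio : p ∈ Finset.Iio q := Finset.mem_Iio.2 hpq
  rw [Finset.card_erase_of_mem hpIio] at hcard
  have : (Finset.Iio q).card = (q : ℕ) := by simp
  rw [this] at hcard
  unfold Defi at hp hq
  push_neg at hp hq
  omega

end D4

namespace D4
open Finset

variable {n : ℕ} {π : Equiv.Perm (Fin (2 * n))}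

lemma pi_zero (hD : IsDumont4 n π) (t : Fin (2 * n)) (h : (π t : ℕ) = 0) : (t : ℕ) = 0 := by
  by_contra ht
  have hdef : (π t : ℕ) < (t : ℕ) := by omega
  have := (hD t hdef).2
  rw [h] at this
  simpa using this

lemma contains1432_of_321 (hD : IsDumont4 n π) (h : PatternContains π p321) :
    PatternContains π p1432 := by
  obtain ⟨f, hf, hiff⟩ := h
  have hN : 0 < 2 * n := (f 0).pos
  have hzero : π ⟨0, hN⟩ = ⟨0, hN⟩ := by
    have h0 : (π.symm ⟨0, hN⟩ : ℕ) = 0 := pi_zero hD _ (by simp)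
    have h1 : π.symm ⟨0, hN⟩ = ⟨0, hN⟩ := Fin.ext h0
    simpa using (congrArg π h1).symm
  have hf0 : (0 : ℕ) < (f 0 : ℕ) := by
    rcases Nat.eq_zero_or_pos (f 0 : ℕ) with h | h
    · exfalso
      have he : f 0 = ⟨0, hN⟩ := Fin.ext h
      have h10 : π (f 1) < π (f 0) := (hiff 1 0).1 (by decide)
      rw [he, hzero] at h10
      exact absurd h10 (by simp [Fin.lt_def])
    · exact h
  have hfpos : ∀ j : Fin 3, (0:ℕ) < (f j : ℕ) := by
    intro j
    rcases Nat.eq_zero_or_pos (j : ℕ) with h | h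
    · have : j = 0 := Fin.ext h
      rw [this]; exact hf0
    · have h2 : (0 : Fin 3) < j := Fin.lt_def.2 (by show (0:ℕ) < (j:ℕ); exact h)
      have := Fin.lt_def.1 (hf h2)
      omega
  have hπpos : ∀ j : Fin 3, (0:ℕ) < (π (f j) : ℕ) := by
    intro j
    rcases Nat.eq_zero_or_pos (π (f j) : ℕ) with h | h
    · exfalso
      have he : π (f j) = ⟨0, hN⟩ := Fin.ext h
      have : f j = ⟨0, hN⟩ := π.injective (by rw [he, hzero])
      have h1 := hfpos j
      rw [this] at h1
      simp at h1
    · exact h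
  refine ⟨Fin.cons ⟨0, hN⟩ f, ?_, ?_⟩
  · intro a b hab
    rcases Fin.eq_zero_or_eq_succ a with rfl | ⟨i, rfl⟩ <;>
      rcases Fin.eq_zero_or_eq_succ b with rfl | ⟨j, rfl⟩
    · exact absurd hab (lt_irrefl _)
    · simp only [Fin.cons_zero, Fin.cons_succ]
      exact Fin.lt_def.2 (hfpos j)
    · exact absurd hab (Fin.not_lt.2 (Fin.le_def.2 (Nat.zero_le _)))
    · simp only [Fin.cons_succ]
      exact hf (Fin.succ_lt_succ_iff.1 hab)
  · intro a b
    rcases Fin.eq_zero_or_eq_succ a with rfl | ⟨i, rfl⟩ <;>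
      rcases Fin.eq_zero_or_eq_succ b with rfl | ⟨j, rfl⟩
    · simp
    · simp only [Fin.cons_zero, Fin.cons_succ]
      constructor
      · intro _
        rw [hzero]
        exact Fin.lt_def.2 (hπpos j)
      · intro _
        fin_cases j <;> decide
    · simp only [Fin.cons_zero, Fin.cons_succ]
      rw [hzero]
      constructor
      · intro h; exact absurd h (by fin_cases i <;> decide)
      · intro h; exact absurd h (Fin.not_lt.2 (Fin.le_def.2 (Nat.zero_le _)))
    · simp only [Fin.cons_succ]
      rw [show (p1432 i.succ < p1432 j.succ) ↔ (p321 i < p321 j) by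
        fin_cases i <;> fin_cases j <;> decide]
      exact hiff i j

lemma contains321_of_1432 (h : PatternContains π p1432) : PatternContains π p321 := by
  obtain ⟨f, hf, hiff⟩ := h
  refine ⟨fun a => f a.succ, fun a b hab => hf (Fin.succ_lt_succ_iff.2 hab), ?_⟩
  intro a b
  rw [show (p321 a < p321 b) ↔ (p1432 a.succ < p1432 b.succ) by
    fin_cases a <;> fin_cases b <;> decide]
  exact hiff a.succ b.succ

lemma avoids_iff (hD : IsDumont4 n π) : Avoids π p1432 ↔ Avoids π p321 := by
  unfold Avoids
  constructor
  · intro h hc; exact h (contains1432_of_321 hD hc)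
  · intro h hc; exact h (contains321_of_1432 hc)

end D4

namespace D4
open Finset

def Good (n : ℕ) (a b : ℕ → Bool) : Prop :=
  (∀ i, n ≤ i → a i = false) ∧ (∀ i, n ≤ i → b i = false) ∧
  cnt a n = cnt b n ∧ ∀ i < n, cnt a (i+1) ≤ cnt b i

lemma Good.le {n : ℕ} {a b : ℕ → Bool} (h : Good n a b) : ∀ m, cnt a m ≤ cnt b m := by
  intro m
  rcases Nat.lt_or_ge m n with hm | hm
  · cases m with
    | zero => simp [cnt]
    | succ i => exact le_trans (h.2.2.2 i (by omega)) (cnt_mono b (by omega))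
  · have ha : cnt a m = cnt a n := by
      unfold cnt
      congr 1
      ext j
      simp only [Finset.mem_filter, Finset.mem_range]
      constructor
      · rintro ⟨h1, h2⟩
        refine ⟨?_, h2⟩
        by_contra hc
        rw [h.1 j (by omega)] at h2
        simp at h2
      · rintro ⟨h1, h2⟩; exact ⟨by omega, h2⟩
    have hb : cnt b n ≤ cnt b m := cnt_mono b hm
    have hc := h.2.2.1
    omega

/-- the set of odd 0-based indices `2j+1` with flag `f j` set -/
def oddSet (n : ℕ) (f : ℕ → Bool) : Finset (Fin (2 * n)) :=
  univ.filter (fun t : Fin (2 * n) => (t : ℕ) % 2 = 1 ∧ f ((t : ℕ) / 2) = true)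

lemma card_univ_filter_fin (N : ℕ) (p : ℕ → Prop) [DecidablePred p] :
    ((univ : Finset (Fin N)).filter (fun t : Fin N => p (t : ℕ))).card = ((Finset.range N).filter p).card := by
  refine Finset.card_nbij (s := (univ : Finset (Fin N)).filter (fun t : Fin N => p (t : ℕ)))
    (t := (Finset.range N).filter p) (fun (t : Fin N) => (t : ℕ)) ?_ ?_ ?_
  · intro t ht
    simp only [Finset.mem_coe, Finset.mem_filter, Finset.mem_univ, true_and] at ht
    exact Finset.mem_filter.2 ⟨Finset.mem_range.2 t.2, ht⟩
  · intro x _ y _ hxy; exact Fin.ext hxy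
  · intro v hv
    simp only [Finset.coe_filter, Finset.mem_range, Set.mem_setOf_eq] at hv
    exact ⟨⟨v, hv.1⟩, by simp only [Finset.coe_filter, Finset.mem_univ, true_and,
      Set.mem_setOf_eq]; exact hv.2, rfl⟩

lemma odd_count (k : ℕ) (f : ℕ → Bool) :
    ((Finset.range k).filter (fun v => v % 2 = 1 ∧ f (v / 2) = true)).card = cnt f (k / 2) := by
  unfold cnt
  symm
  apply Finset.card_bij (fun j _ => 2 * j + 1)
  · intro j hj
    simp only [Finset.mem_filter, Finset.mem_range] at hj ⊢
    refine ⟨by omega, by omega, by rw [show (2*j+1)/2 = j by omega]; exact hj.2⟩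
  · intro s _ t _ hst; omega
  · intro v hv
    simp only [Finset.mem_filter, Finset.mem_range] at hv
    refine ⟨v / 2, Finset.mem_filter.2 ⟨Finset.mem_range.2 (by omega), ?_⟩, by omega⟩
    have : v / 2 * 2 + 1 = v := by omega
    rw [show v / 2 = (v:ℕ)/2 from rfl]
    exact hv.2.2

lemma range_filter_le (k x : ℕ) (hx : x < k) (q : ℕ → Prop) [DecidablePred q] :
    ((Finset.range k).filter (fun v => q v ∧ v ≤ x)).card
      = ((Finset.range (x+1)).filter q).card := by
  congr 1
  ext v
  simp only [Finset.mem_filter, Finset.mem_range]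
  constructor
  · rintro ⟨h1, h2, h3⟩; exact ⟨by omega, h2⟩
  · rintro ⟨h1, h2⟩; exact ⟨by omega, h2, by omega⟩

lemma range_filter_lt (k x : ℕ) (hx : x ≤ k) (q : ℕ → Prop) [DecidablePred q] :
    ((Finset.range k).filter (fun v => q v ∧ v < x)).card
      = ((Finset.range x).filter q).card := by
  congr 1
  ext v
  simp only [Finset.mem_filter, Finset.mem_range]
  constructor
  · rintro ⟨h1, h2, h3⟩; exact ⟨by omega, h2⟩
  · rintro ⟨h1, h2⟩; exact ⟨by omega, h2, by omega⟩

variable {n : ℕ} {f : ℕ → Bool}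

lemma oddSet_card : (oddSet n f).card = cnt f n := by
  unfold oddSet
  rw [card_univ_filter_fin (2*n) (fun v => v % 2 = 1 ∧ f (v / 2) = true), odd_count]
  congr 1
  omega

lemma oddSet_filter_le (x : Fin (2 * n)) :
    ((oddSet n f).filter (· ≤ x)).card = cnt f (((x : ℕ) + 1) / 2) := by
  unfold oddSet
  rw [Finset.filter_filter]
  have : ∀ t : Fin (2 * n), (((t : ℕ) % 2 = 1 ∧ f ((t : ℕ) / 2) = true) ∧ t ≤ x)
      ↔ (((t : ℕ) % 2 = 1 ∧ f ((t : ℕ) / 2) = true) ∧ (t : ℕ) ≤ (x : ℕ)) := by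
    intro t; rw [Fin.le_def]
  rw [Finset.filter_congr (fun t _ => this t)]
  rw [card_univ_filter_fin (2*n) (fun v => (v % 2 = 1 ∧ f (v / 2) = true) ∧ v ≤ (x : ℕ))]
  rw [range_filter_le _ _ x.2, odd_count]

lemma oddSet_filter_lt (x : Fin (2 * n)) :
    ((oddSet n f).filter (· < x)).card = cnt f ((x : ℕ) / 2) := by
  unfold oddSet
  rw [Finset.filter_filter]
  have : ∀ t : Fin (2 * n), (((t : ℕ) % 2 = 1 ∧ f ((t : ℕ) / 2) = true) ∧ t < x)
      ↔ (((t : ℕ) % 2 = 1 ∧ f ((t : ℕ) / 2) = true) ∧ (t : ℕ) < (x : ℕ)) := by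
    intro t; rw [Fin.lt_def]
  rw [Finset.filter_congr (fun t _ => this t)]
  rw [card_univ_filter_fin (2*n) (fun v => (v % 2 = 1 ∧ f (v / 2) = true) ∧ v < (x : ℕ))]
  rw [range_filter_lt _ _ (le_of_lt x.2), odd_count]

lemma oddSet_compl_filter_le (x : Fin (2 * n)) :
    (((oddSet n f)ᶜ).filter (· ≤ x)).card = (x : ℕ) + 1 - cnt f (((x : ℕ) + 1) / 2) := by
  have hpart := Finset.card_filter_add_card_filter_not
    (s := (univ : Finset (Fin (2*n))).filter (· ≤ x)) (p := fun t => t ∈ oddSet n f)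
  have h1 : ((univ : Finset (Fin (2*n))).filter (· ≤ x)).card = (x : ℕ) + 1 := by
    have : (univ : Finset (Fin (2*n))).filter (· ≤ x) = Finset.Iic x := by
      ext t; simp
    rw [this]
    simp
  have h2 : (((univ : Finset (Fin (2*n))).filter (· ≤ x)).filter (fun t => t ∈ oddSet n f)).card
      = cnt f (((x : ℕ) + 1) / 2) := by
    rw [← oddSet_filter_le x]
    congr 1
    ext t
    simp only [Finset.mem_filter, Finset.mem_univ, true_and]
    tauto
  have h3 : ((univ : Finset (Fin (2*n))).filter (· ≤ x)).filter (fun t => ¬ t ∈ oddSet n f)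
      = ((oddSet n f)ᶜ).filter (· ≤ x) := by
    ext t
    simp only [Finset.mem_filter, Finset.mem_univ, true_and, Finset.mem_compl]
    tauto
  rw [h2, h3] at hpart
  omega

end D4

namespace D4
open Finset

section ordmore
variable {α : Type*} [LinearOrder α] [DecidableEq α]

lemma ord_upper {s : Finset α} {k : ℕ} (h : s.card = k) (m : Fin k) :
    (s.filter (· < s.orderEmbOfFin h m)).card ≤ (m : ℕ) := by
  have hsub : s.filter (· < s.orderEmbOfFin h m) ⊆ (Finset.Iio m).image (s.orderEmbOfFin h) := by
    intro y hy
    obtain ⟨hys, hyx⟩ := Finset.mem_filter.1 hy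
    obtain ⟨j, hj⟩ := Set.mem_range.1 (by rw [Finset.range_orderEmbOfFin]; exact hys :
      y ∈ Set.range (s.orderEmbOfFin h))
    refine Finset.mem_image.2 ⟨j, Finset.mem_Iio.2 ?_, hj⟩
    exact (s.orderEmbOfFin h).lt_iff_lt.1 (hj ▸ hyx)
  have h1 := Finset.card_le_card hsub
  have h2 := Finset.card_image_le (s := Finset.Iio m) (f := s.orderEmbOfFin h)
  simp at h2
  omega

lemma ord_ge {s : Finset α} {k : ℕ} (h : s.card = k) (m : Fin k) {x : α}
    (hc : (s.filter (· < x)).card ≤ (m : ℕ)) : x ≤ s.orderEmbOfFin h m := by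
  by_contra hx
  push_neg at hx
  have h1 := ord_lower h m
  have hsub : s.filter (· ≤ s.orderEmbOfFin h m) ⊆ s.filter (· < x) := by
    intro y hy
    obtain ⟨h1, h2⟩ := Finset.mem_filter.1 hy
    exact Finset.mem_filter.2 ⟨h1, lt_of_le_of_lt h2 hx⟩
  have := Finset.card_le_card hsub
  omega

end ordmore

variable {N : ℕ}

lemma compl_card_eq {s : Finset (Fin N)} {k : ℕ} (hs : s.card = k) : sᶜ.card = N - k := by
  rw [Finset.card_compl, hs, Fintype.card_fin]

/-- move the `j`-th smallest element of `s` to the `j`-th smallest element of `t`,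
and similarly on complements -/
def moveFun (k : ℕ) (s t : Finset (Fin N)) (hs : s.card = k) (ht : t.card = k) :
    Fin N → Fin N := fun x =>
  if hx : x ∈ s then t.orderEmbOfFin ht ((s.orderIsoOfFin hs).symm ⟨x, hx⟩)
  else tᶜ.orderEmbOfFin (compl_card_eq ht) ((sᶜ.orderIsoOfFin (compl_card_eq hs)).symm
    ⟨x, Finset.mem_compl.2 hx⟩)

variable {k : ℕ} {s t : Finset (Fin N)} {hs : s.card = k} {ht : t.card = k}

lemma emb_iso_symm (u : Finset (Fin N)) {l : ℕ} (hu : u.card = l) (x : Fin N) (hx : x ∈ u) :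
    u.orderEmbOfFin hu ((u.orderIsoOfFin hu).symm ⟨x, hx⟩) = x := by
  rw [← Finset.coe_orderIsoOfFin_apply, OrderIso.apply_symm_apply]

lemma iso_symm_emb (u : Finset (Fin N)) {l : ℕ} (hu : u.card = l) (j : Fin l)
    (hm : u.orderEmbOfFin hu j ∈ u) :
    (u.orderIsoOfFin hu).symm ⟨u.orderEmbOfFin hu j, hm⟩ = j := by
  rw [show (⟨u.orderEmbOfFin hu j, hm⟩ : {x // x ∈ u}) = u.orderIsoOfFin hu j from
    Subtype.ext (Finset.coe_orderIsoOfFin_apply u hu j).symm]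
  exact OrderIso.symm_apply_apply _ _

lemma moveFun_mem {x : Fin N} (hx : x ∈ s) : moveFun k s t hs ht x ∈ t := by
  rw [moveFun, dif_pos hx]; exact Finset.orderEmbOfFin_mem _ _ _

lemma moveFun_not_mem {x : Fin N} (hx : x ∉ s) : moveFun k s t hs ht x ∉ t := by
  rw [moveFun, dif_neg hx]
  have := Finset.orderEmbOfFin_mem tᶜ (compl_card_eq ht)
    ((sᶜ.orderIsoOfFin (compl_card_eq hs)).symm ⟨x, Finset.mem_compl.2 hx⟩)
  exact Finset.mem_compl.1 this

lemma moveFun_inv (x : Fin N) : moveFun k t s ht hs (moveFun k s t hs ht x) = x := by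
  unfold moveFun
  by_cases hx : x ∈ s
  · rw [dif_pos hx]
    have hmem : t.orderEmbOfFin ht ((s.orderIsoOfFin hs).symm ⟨x, hx⟩) ∈ t :=
      Finset.orderEmbOfFin_mem _ _ _
    rw [dif_pos hmem, iso_symm_emb t ht _ hmem, emb_iso_symm s hs x hx]
  · rw [dif_neg hx]
    have hmem : tᶜ.orderEmbOfFin (compl_card_eq ht)
        ((sᶜ.orderIsoOfFin (compl_card_eq hs)).symm ⟨x, Finset.mem_compl.2 hx⟩) ∈ tᶜ :=
      Finset.orderEmbOfFin_mem _ _ _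
    rw [dif_neg (Finset.mem_compl.1 hmem), iso_symm_emb tᶜ (compl_card_eq ht) _ hmem,
      emb_iso_symm sᶜ (compl_card_eq hs) x (Finset.mem_compl.2 hx)]

/-- the permutation moving `s` to `t` monotonically and `sᶜ` to `tᶜ` monotonically -/
def movePerm (k : ℕ) (s t : Finset (Fin N)) (hs : s.card = k) (ht : t.card = k) :
    Equiv.Perm (Fin N) :=
  ⟨moveFun k s t hs ht, moveFun k t s ht hs, moveFun_inv, moveFun_inv⟩

lemma movePerm_lt {x : Fin N} (hx : x ∈ s)
    (hyp : ∀ y : Fin N, (s.filter (· ≤ y)).card ≤ (t.filter (· < y)).card) :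
    movePerm k s t hs ht x < x := by
  show moveFun k s t hs ht x < x
  unfold moveFun
  rw [dif_pos hx]
  set j := (s.orderIsoOfFin hs).symm ⟨x, hx⟩ with hj
  have hxe : s.orderEmbOfFin hs j = x := emb_iso_symm s hs x hx
  apply ord_lt
  have h1 := ord_lower hs j
  rw [hxe] at h1
  have h2 := hyp x
  omega

lemma movePerm_ge {x : Fin N} (hx : x ∉ s)
    (hyp : ∀ y : Fin N, (tᶜ.filter (· < y)).card ≤ (sᶜ.filter (· < y)).card) :
    x ≤ movePerm k s t hs ht x := by
  show x ≤ moveFun k s t hs ht x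
  unfold moveFun
  rw [dif_neg hx]
  set j := (sᶜ.orderIsoOfFin (compl_card_eq hs)).symm ⟨x, Finset.mem_compl.2 hx⟩ with hj
  have hxe : sᶜ.orderEmbOfFin (compl_card_eq hs) j = x :=
    emb_iso_symm sᶜ (compl_card_eq hs) x (Finset.mem_compl.2 hx)
  apply ord_ge
  have h1 := ord_upper (compl_card_eq hs) j
  rw [hxe] at h1
  have h2 := hyp x
  omega

lemma movePerm_mono_mem {x y : Fin N} (hx : x ∈ s) (hy : y ∈ s) (hxy : x < y) :
    movePerm k s t hs ht x < movePerm k s t hs ht y := by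
  show moveFun k s t hs ht x < moveFun k s t hs ht y
  unfold moveFun
  rw [dif_pos hx, dif_pos hy]
  apply (t.orderEmbOfFin ht).strictMono
  apply (s.orderIsoOfFin hs).symm.strictMono
  exact hxy

lemma movePerm_mono_not_mem {x y : Fin N} (hx : x ∉ s) (hy : y ∉ s) (hxy : x < y) :
    movePerm k s t hs ht x < movePerm k s t hs ht y := by
  show moveFun k s t hs ht x < moveFun k s t hs ht y
  unfold moveFun
  rw [dif_neg hx, dif_neg hy]
  apply (tᶜ.orderEmbOfFin (compl_card_eq ht)).strictMono
  apply (sᶜ.orderIsoOfFin (compl_card_eq hs)).symm.strictMono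
  exact hxy

end D4

namespace D4
open Finset

variable {n : ℕ}

/-- extraction of deficiency positions: `a i = true` iff 0-based position `2i+1` is a deficiency -/
def aOf (n : ℕ) (π : Equiv.Perm (Fin (2*n))) : ℕ → Bool := fun i =>
  if h : 2*i+1 < 2*n then decide ((π ⟨2*i+1, h⟩ : ℕ) < 2*i+1) else false

/-- extraction of deficiency values: `b i = true` iff 0-based value `2i+1` is a deficiency value -/
def bOf (n : ℕ) (π : Equiv.Perm (Fin (2*n))) : ℕ → Bool := fun i =>
  if h : 2*i+1 < 2*n then decide (2*i+1 < (π.symm ⟨2*i+1, h⟩ : ℕ)) else false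

variable {π : Equiv.Perm (Fin (2*n))}

lemma aOf_true_iff {i : ℕ} (h : 2*i+1 < 2*n) :
    aOf n π i = true ↔ (π ⟨2*i+1, h⟩ : ℕ) < 2*i+1 := by
  unfold aOf; rw [dif_pos h]; simp

lemma bOf_true_iff {i : ℕ} (h : 2*i+1 < 2*n) :
    bOf n π i = true ↔ 2*i+1 < (π.symm ⟨2*i+1, h⟩ : ℕ) := by
  unfold bOf; rw [dif_pos h]; simp

lemma mem_oddSet_aOf (hD : IsDumont4 n π) (x : Fin (2*n)) :
    x ∈ oddSet n (aOf n π) ↔ Defi π x := by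
  unfold oddSet
  simp only [Finset.mem_filter, Finset.mem_univ, true_and]
  constructor
  · rintro ⟨hodd, ha⟩
    have hlt : 2*((x:ℕ)/2)+1 < 2*n := by have := x.2; omega
    have hx : (⟨2*((x:ℕ)/2)+1, hlt⟩ : Fin (2*n)) = x := Fin.ext (by simp; omega)
    have := (aOf_true_iff hlt).1 ha
    rw [hx] at this
    unfold Defi
    omega
  · intro hdef
    have hodd : (x:ℕ) % 2 = 1 := by
      have h1 := (hD x hdef).1
      rcases h1 with ⟨r, hr⟩
      omega
    refine ⟨hodd, ?_⟩
    have hlt : 2*((x:ℕ)/2)+1 < 2*n := by have := x.2; omega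
    have hx : (⟨2*((x:ℕ)/2)+1, hlt⟩ : Fin (2*n)) = x := Fin.ext (by simp; omega)
    rw [aOf_true_iff hlt, hx]
    unfold Defi at hdef
    omega

lemma mem_oddSet_bOf (hD : IsDumont4 n π) (x : Fin (2*n)) :
    x ∈ oddSet n (bOf n π) ↔ (x : ℕ) < (π.symm x : ℕ) := by
  unfold oddSet
  simp only [Finset.mem_filter, Finset.mem_univ, true_and]
  constructor
  · rintro ⟨hodd, hb⟩
    have hlt : 2*((x:ℕ)/2)+1 < 2*n := by have := x.2; omega
    have hx : (⟨2*((x:ℕ)/2)+1, hlt⟩ : Fin (2*n)) = x := Fin.ext (by simp; omega)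
    have := (bOf_true_iff hlt).1 hb
    rw [hx] at this
    omega
  · intro hlt'
    have hdef : Defi π (π.symm x) := by
      unfold Defi
      rw [Equiv.apply_symm_apply]
      exact hlt'
    have hodd : (x:ℕ) % 2 = 1 := by
      have h2 := (hD _ hdef).2
      rw [Equiv.apply_symm_apply] at h2
      rcases h2 with ⟨r, hr⟩
      omega
    refine ⟨hodd, ?_⟩
    have hlt : 2*((x:ℕ)/2)+1 < 2*n := by have := x.2; omega
    have hx : (⟨2*((x:ℕ)/2)+1, hlt⟩ : Fin (2*n)) = x := Fin.ext (by simp; omega)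
    rw [bOf_true_iff hlt, hx]
    omega

lemma cnt_aOf_le (hD : IsDumont4 n π) (i : ℕ) (hi : i < n) :
    cnt (aOf n π) (i+1) ≤ cnt (bOf n π) i := by
  unfold cnt
  apply Finset.card_le_card_of_injOn
    (fun m => if h : 2*m+1 < 2*n then ((π ⟨2*m+1, h⟩ : ℕ))/2 else 0)
  · intro m hm
    simp only [Finset.mem_coe, Finset.mem_filter, Finset.mem_range] at hm ⊢
    obtain ⟨hmi, ha⟩ := hm
    have hlt : 2*m+1 < 2*n := by omega
    rw [dif_pos hlt]
    have hdef : (π ⟨2*m+1, hlt⟩ : ℕ) < 2*m+1 := (aOf_true_iff hlt).1 ha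
    have hodd : (π ⟨2*m+1, hlt⟩ : ℕ) % 2 = 1 := by
      have := (hD ⟨2*m+1, hlt⟩ (by simpa using hdef)).2
      rcases this with ⟨r, hr⟩
      omega
    set v := (π ⟨2*m+1, hlt⟩ : ℕ) with hv
    have hjlt : 2*(v/2)+1 < 2*n := by have := (π ⟨2*m+1, hlt⟩).2; omega
    constructor
    · omega
    · rw [bOf_true_iff hjlt]
      have he : (⟨2*(v/2)+1, hjlt⟩ : Fin (2*n)) = π ⟨2*m+1, hlt⟩ := Fin.ext (by simp; omega)
      rw [he, Equiv.symm_apply_apply]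
      simp
      omega
  · intro x hx y hy hxy
    simp only [Finset.coe_filter, Finset.mem_range, Set.mem_setOf_eq] at hx hy
    have hxlt : 2*x+1 < 2*n := by omega
    have hylt : 2*y+1 < 2*n := by omega
    dsimp only at hxy
    rw [dif_pos hxlt, dif_pos hylt] at hxy
    have hox : (π ⟨2*x+1, hxlt⟩ : ℕ) % 2 = 1 := by
      have hdef : (π ⟨2*x+1, hxlt⟩ : ℕ) < 2*x+1 := (aOf_true_iff hxlt).1 hx.2
      have := (hD ⟨2*x+1, hxlt⟩ (by simpa using hdef)).2
      rcases this with ⟨r, hr⟩; omega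
    have hoy : (π ⟨2*y+1, hylt⟩ : ℕ) % 2 = 1 := by
      have hdef : (π ⟨2*y+1, hylt⟩ : ℕ) < 2*y+1 := (aOf_true_iff hylt).1 hy.2
      have := (hD ⟨2*y+1, hylt⟩ (by simpa using hdef)).2
      rcases this with ⟨r, hr⟩; omega
    have hval : (π ⟨2*x+1, hxlt⟩ : ℕ) = (π ⟨2*y+1, hylt⟩ : ℕ) := by omega
    have := π.injective (Fin.ext hval : π ⟨2*x+1, hxlt⟩ = π ⟨2*y+1, hylt⟩)
    have := Fin.mk.injEq (2*x+1) hxlt (2*y+1) hylt ▸ this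
    omega

lemma cnt_bOf_le (hD : IsDumont4 n π) :
    cnt (bOf n π) n ≤ cnt (aOf n π) n := by
  unfold cnt
  apply Finset.card_le_card_of_injOn
    (fun j => if h : 2*j+1 < 2*n then ((π.symm ⟨2*j+1, h⟩ : ℕ))/2 else 0)
  · intro j hj
    simp only [Finset.mem_coe, Finset.mem_filter, Finset.mem_range] at hj ⊢
    obtain ⟨hji, hb⟩ := hj
    have hlt : 2*j+1 < 2*n := by
      rcases Nat.lt_or_ge (2*j+1) (2*n) with h | h
      · exact h
      · exfalso; unfold bOf at hb; rw [dif_neg (by omega)] at hb; simp at hb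
    rw [dif_pos hlt]
    have hgt : 2*j+1 < (π.symm ⟨2*j+1, hlt⟩ : ℕ) := (bOf_true_iff hlt).1 hb
    set u := π.symm ⟨2*j+1, hlt⟩ with hu
    have hdef : Defi π u := by
      unfold Defi
      rw [hu, Equiv.apply_symm_apply]
      simpa using hgt
    have hodd : (u:ℕ) % 2 = 1 := by
      have := (hD u hdef).1
      rcases this with ⟨r, hr⟩; omega
    have hult : 2*((u:ℕ)/2)+1 < 2*n := by have := u.2; omega
    constructor
    · have := u.2; omega
    · rw [aOf_true_iff hult]
      have he : (⟨2*((u:ℕ)/2)+1, hult⟩ : Fin (2*n)) = u := Fin.ext (by simp; omega)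
      rw [he]
      have : (π u : ℕ) = 2*j+1 := by rw [hu, Equiv.apply_symm_apply]
      omega
  · intro x hx y hy hxy
    simp only [Finset.coe_filter, Finset.mem_range, Set.mem_setOf_eq] at hx hy
    have hxlt : 2*x+1 < 2*n := by
      rcases Nat.lt_or_ge (2*x+1) (2*n) with h | h
      · exact h
      · exfalso; have := hx.2; unfold bOf at this; rw [dif_neg (by omega)] at this; simp at this
    have hylt : 2*y+1 < 2*n := by
      rcases Nat.lt_or_ge (2*y+1) (2*n) with h | h
      · exact h
      · exfalso; have := hy.2; unfold bOf at this; rw [dif_neg (by omega)] at this; simp at this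
    dsimp only at hxy
    rw [dif_pos hxlt, dif_pos hylt] at hxy
    have hox : (π.symm ⟨2*x+1, hxlt⟩ : ℕ) % 2 = 1 := by
      have hgt : 2*x+1 < (π.symm ⟨2*x+1, hxlt⟩ : ℕ) := (bOf_true_iff hxlt).1 hx.2
      have hdef : Defi π (π.symm ⟨2*x+1, hxlt⟩) := by
        unfold Defi; rw [Equiv.apply_symm_apply]; simpa using hgt
      have := (hD _ hdef).1
      rcases this with ⟨r, hr⟩; omega
    have hoy : (π.symm ⟨2*y+1, hylt⟩ : ℕ) % 2 = 1 := by
      have hgt : 2*y+1 < (π.symm ⟨2*y+1, hylt⟩ : ℕ) := (bOf_true_iff hylt).1 hy.2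
      have hdef : Defi π (π.symm ⟨2*y+1, hylt⟩) := by
        unfold Defi; rw [Equiv.apply_symm_apply]; simpa using hgt
      have := (hD _ hdef).1
      rcases this with ⟨r, hr⟩; omega
    have hval : (π.symm ⟨2*x+1, hxlt⟩ : ℕ) = (π.symm ⟨2*y+1, hylt⟩ : ℕ) := by omega
    have := π.symm.injective (Fin.ext hval : π.symm ⟨2*x+1, hxlt⟩ = π.symm ⟨2*y+1, hylt⟩)
    simp only [Fin.mk.injEq] at this
    omega

lemma xtr_good (hD : IsDumont4 n π) : Good n (aOf n π) (bOf n π) := by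
  refine ⟨?_, ?_, ?_, ?_⟩
  · intro i hi; unfold aOf; rw [dif_neg (by omega)]
  · intro i hi; unfold bOf; rw [dif_neg (by omega)]
  · apply le_antisymm
    · cases n with
      | zero => simp [cnt]
      | succ m =>
        calc cnt (aOf (m+1) π) (m+1) ≤ cnt (bOf (m+1) π) m := cnt_aOf_le hD m (by omega)
          _ ≤ cnt (bOf (m+1) π) (m+1) := cnt_mono _ (by omega)
    · exact cnt_bOf_le hD
  · intro i hi; exact cnt_aOf_le hD i hi

end D4

namespace D4
open Finset

variable {n : ℕ} {a b : ℕ → Bool}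

lemma oddSet_compl_filter_lt {f : ℕ → Bool} (x : Fin (2 * n)) :
    (((oddSet n f)ᶜ).filter (· < x)).card = (x : ℕ) - cnt f ((x : ℕ) / 2) := by
  have hpart := Finset.card_filter_add_card_filter_not
    (s := (univ : Finset (Fin (2*n))).filter (· < x)) (p := fun t => t ∈ oddSet n f)
  have h1 : ((univ : Finset (Fin (2*n))).filter (· < x)).card = (x : ℕ) := by
    have : (univ : Finset (Fin (2*n))).filter (· < x) = Finset.Iio x := by
      ext t; simp
    rw [this]; simp
  have h2 : (((univ : Finset (Fin (2*n))).filter (· < x)).filter (fun t => t ∈ oddSet n f)).card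
      = cnt f ((x : ℕ) / 2) := by
    rw [← oddSet_filter_lt x]
    congr 1
    ext t
    simp only [Finset.mem_filter, Finset.mem_univ, true_and]
    tauto
  have h3 : ((univ : Finset (Fin (2*n))).filter (· < x)).filter (fun t => ¬ t ∈ oddSet n f)
      = ((oddSet n f)ᶜ).filter (· < x) := by
    ext t
    simp only [Finset.mem_filter, Finset.mem_univ, true_and, Finset.mem_compl]
    tauto
  rw [h2, h3] at hpart
  omega

lemma oddSet_card_b (hG : Good n a b) : (oddSet n b).card = cnt a n := by
  rw [oddSet_card]; exact hG.2.2.1.symm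

/-- the permutation reconstructed from Good data -/
def recon (hG : Good n a b) : Equiv.Perm (Fin (2*n)) :=
  movePerm (cnt a n) (oddSet n a) (oddSet n b) oddSet_card (oddSet_card_b hG)

lemma good_hyp1 (hG : Good n a b) (y : Fin (2*n)) :
    ((oddSet n a).filter (· ≤ y)).card ≤ ((oddSet n b).filter (· < y)).card := by
  rw [oddSet_filter_le, oddSet_filter_lt]
  by_cases hpar : (y : ℕ) % 2 = 1
  · have e1 : ((y:ℕ)+1)/2 = (y:ℕ)/2 + 1 := by omega
    rw [e1]
    exact hG.2.2.2 _ (by have := y.2; omega)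
  · have e1 : ((y:ℕ)+1)/2 = (y:ℕ)/2 := by omega
    rw [e1]
    exact hG.le _

lemma good_hyp2 (hG : Good n a b) (y : Fin (2*n)) :
    (((oddSet n b)ᶜ).filter (· < y)).card ≤ (((oddSet n a)ᶜ).filter (· < y)).card := by
  rw [oddSet_compl_filter_lt, oddSet_compl_filter_lt]
  have h1 := hG.le ((y:ℕ)/2)
  omega

lemma recon_defi_iff (hG : Good n a b) (x : Fin (2*n)) :
    Defi (recon hG) x ↔ x ∈ oddSet n a := by
  constructor
  · intro h
    by_contra hx
    have := movePerm_ge (hs := oddSet_card) (ht := oddSet_card_b hG) hx (good_hyp2 hG)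
    unfold Defi at h
    rw [Fin.le_def] at this
    change ((recon hG) x : ℕ) < (x:ℕ) at h
    exact absurd h (by unfold recon; omega)
  · intro hx
    have := movePerm_lt (hs := oddSet_card) (ht := oddSet_card_b hG) hx (good_hyp1 hG)
    unfold Defi
    rw [Fin.lt_def] at this
    exact this

lemma recon_mem_iff (hG : Good n a b) (x : Fin (2*n)) (hx : x ∈ oddSet n a) :
    recon hG x ∈ oddSet n b := moveFun_mem hx

lemma recon_not_mem (hG : Good n a b) (x : Fin (2*n)) (hx : x ∉ oddSet n a) :
    recon hG x ∉ oddSet n b := moveFun_not_mem hx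

lemma recon_symm_iff (hG : Good n a b) (x : Fin (2*n)) :
    (x : ℕ) < ((recon hG).symm x : ℕ) ↔ x ∈ oddSet n b := by
  set u := (recon hG).symm x with hu
  have hru : recon hG u = x := by rw [hu, Equiv.apply_symm_apply]
  constructor
  · intro h
    have hmem : u ∈ oddSet n a := by
      by_contra hc
      have := movePerm_ge (hs := oddSet_card) (ht := oddSet_card_b hG) hc (good_hyp2 hG)
      change u ≤ recon hG u at this
      rw [hru, Fin.le_def] at this
      omega
    rw [← hru]
    exact recon_mem_iff hG u hmem
  · intro h
    have hmem : u ∈ oddSet n a := by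
      by_contra hc
      exact absurd (hru ▸ recon_not_mem hG u hc) (by simpa using h)
    have := movePerm_lt (hs := oddSet_card) (ht := oddSet_card_b hG) hmem (good_hyp1 hG)
    change recon hG u < u at this
    rw [hru, Fin.lt_def] at this
    exact this

lemma mem_oddSet_odd {f : ℕ → Bool} {x : Fin (2*n)} (h : x ∈ oddSet n f) :
    (x : ℕ) % 2 = 1 ∧ f ((x:ℕ)/2) = true := by
  unfold oddSet at h
  simpa using (Finset.mem_filter.1 h).2

lemma recon_dumont (hG : Good n a b) : IsDumont4 n (recon hG) := by
  intro i hi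
  have hdef : Defi (recon hG) i := hi
  have hmem := (recon_defi_iff hG i).1 hdef
  have h1 := (mem_oddSet_odd hmem).1
  have hmem2 := recon_mem_iff hG i hmem
  have h2 := (mem_oddSet_odd hmem2).1
  constructor
  · exact Nat.even_iff.2 (by omega)
  · exact Nat.even_iff.2 (by omega)

lemma recon_avoids (hG : Good n a b) : Avoids (recon hG) p321 := by
  apply not321_of_classes
  · intro p q hpq hp hq
    exact movePerm_mono_mem ((recon_defi_iff hG p).1 hp) ((recon_defi_iff hG q).1 hq) hpq
  · intro p q hpq hp hq
    exact movePerm_mono_not_mem (fun h => hp ((recon_defi_iff hG p).2 h))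
      (fun h => hq ((recon_defi_iff hG q).2 h)) hpq

lemma roundtripA_a (hG : Good n a b) : aOf n (recon hG) = a := by
  funext i
  by_cases hi : i < n
  · have hlt : 2*i+1 < 2*n := by omega
    have hmemiff : ((⟨2*i+1, hlt⟩ : Fin (2*n)) ∈ oddSet n a) ↔ a i = true := by
      unfold oddSet
      simp only [Finset.mem_filter, Finset.mem_univ, true_and]
      constructor
      · rintro ⟨-, h⟩
        rwa [show (2*i+1)/2 = i by omega] at h
      · intro h
        exact ⟨by omega, by rwa [show (2*i+1)/2 = i by omega]⟩
    have key : aOf n (recon hG) i = true ↔ a i = true := by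
      rw [aOf_true_iff hlt]
      rw [← hmemiff, ← recon_defi_iff hG]
      rfl
    rcases Bool.dichotomy (a i) with h | h <;> rcases Bool.dichotomy (aOf n (recon hG) i) with h' | h' <;>
      simp_all
  · rw [hG.1 i (by omega)]
    unfold aOf
    rw [dif_neg (by omega)]

lemma roundtripA_b (hG : Good n a b) : bOf n (recon hG) = b := by
  funext i
  by_cases hi : i < n
  · have hlt : 2*i+1 < 2*n := by omega
    have hmemiff : ((⟨2*i+1, hlt⟩ : Fin (2*n)) ∈ oddSet n b) ↔ b i = true := by
      unfold oddSet
      simp only [Finset.mem_filter, Finset.mem_univ, true_and]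
      constructor
      · rintro ⟨-, h⟩
        rwa [show (2*i+1)/2 = i by omega] at h
      · intro h
        exact ⟨by omega, by rwa [show (2*i+1)/2 = i by omega]⟩
    have key : bOf n (recon hG) i = true ↔ b i = true := by
      rw [bOf_true_iff hlt]
      rw [← hmemiff, ← recon_symm_iff hG]
    rcases Bool.dichotomy (b i) with h | h <;> rcases Bool.dichotomy (bOf n (recon hG) i) with h' | h' <;>
      simp_all
  · rw [hG.2.1 i (by omega)]
    unfold bOf
    rw [dif_neg (by omega)]

lemma roundtripB {π : Equiv.Perm (Fin (2*n))} (hD : IsDumont4 n π) (hA : Avoids π p321) :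
    recon (xtr_good hD) = π := by
  set k := cnt (aOf n π) n with hk
  set D := oddSet n (aOf n π) with hDdef
  set E := oddSet n (bOf n π) with hEdef
  have hDc : D.card = k := oddSet_card
  have hEc : E.card = k := oddSet_card_b (xtr_good hD)
  have hmemD : ∀ x : Fin (2*n), x ∈ D ↔ Defi π x := mem_oddSet_aOf hD
  have hmemE : ∀ x : Fin (2*n), x ∈ E ↔ (x : ℕ) < (π.symm x : ℕ) := mem_oddSet_bOf hD
  -- on D
  have hfmem : ∀ j : Fin k, π (D.orderEmbOfFin hDc j) ∈ E := by
    intro j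
    have hm := Finset.orderEmbOfFin_mem D hDc j
    rw [hmemE, Equiv.symm_apply_apply]
    exact (hmemD _).1 hm
  have hfmono : StrictMono (fun j : Fin k => π (D.orderEmbOfFin hDc j)) := by
    intro x y hxy
    apply def_mono hA ((D.orderEmbOfFin hDc).strictMono hxy)
    · exact (hmemD _).1 (Finset.orderEmbOfFin_mem D hDc x)
    · exact (hmemD _).1 (Finset.orderEmbOfFin_mem D hDc y)
  have hfeq := Finset.orderEmbOfFin_unique hEc hfmem hfmono
  -- on complement
  have hgmem : ∀ j : Fin (2*n - k), π (Dᶜ.orderEmbOfFin (compl_card_eq hDc) j) ∈ Eᶜ := by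
    intro j
    have hm := Finset.orderEmbOfFin_mem Dᶜ (compl_card_eq hDc) j
    rw [Finset.mem_compl] at hm ⊢
    rw [hmemE, Equiv.symm_apply_apply]
    have : ¬ Defi π _ := fun h => hm ((hmemD _).2 h)
    unfold Defi at this
    omega
  have hgmono : StrictMono (fun j : Fin (2*n - k) => π (Dᶜ.orderEmbOfFin (compl_card_eq hDc) j)) := by
    intro x y hxy
    apply exc_mono hA ((Dᶜ.orderEmbOfFin (compl_card_eq hDc)).strictMono hxy)
    · have hm := Finset.orderEmbOfFin_mem Dᶜ (compl_card_eq hDc) x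
      rw [Finset.mem_compl] at hm
      exact fun h => hm ((hmemD _).2 h)
    · have hm := Finset.orderEmbOfFin_mem Dᶜ (compl_card_eq hDc) y
      rw [Finset.mem_compl] at hm
      exact fun h => hm ((hmemD _).2 h)
  have hgeq := Finset.orderEmbOfFin_unique (compl_card_eq hEc) hgmem hgmono
  apply Equiv.ext
  intro x
  show moveFun k D E hDc hEc x = π x
  unfold moveFun
  by_cases hx : x ∈ D
  · rw [dif_pos hx]
    have := congrFun hfeq ((D.orderIsoOfFin hDc).symm ⟨x, hx⟩)
    rw [emb_iso_symm D hDc x hx] at this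
    exact this.symm
  · rw [dif_neg hx]
    have := congrFun hgeq ((Dᶜ.orderIsoOfFin (compl_card_eq hDc)).symm ⟨x, Finset.mem_compl.2 hx⟩)
    rw [emb_iso_symm Dᶜ (compl_card_eq hDc) x (Finset.mem_compl.2 hx)] at this
    exact this.symm

/-- the bijection between the permutations and Good pairs -/
def permHubEquiv (n : ℕ) :
    {π : Equiv.Perm (Fin (2*n)) // IsDumont4 n π ∧ Avoids π p321} ≃
    {ab : (ℕ → Bool) × (ℕ → Bool) // Good n ab.1 ab.2} where
  toFun := fun ⟨π, h⟩ => ⟨(aOf n π, bOf n π), xtr_good h.1⟩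
  invFun := fun ⟨_, hG⟩ => ⟨recon hG, recon_dumont hG, recon_avoids hG⟩
  left_inv := fun ⟨π, h⟩ => Subtype.ext (roundtripB h.1 h.2)
  right_inv := fun ⟨⟨a, b⟩, hG⟩ => Subtype.ext (by
    simp only
    rw [roundtripA_a hG, roundtripA_b hG])

end D4

namespace D4
open Finset DyckStep

variable {a b : ℕ → Bool}

/-- the step at 0-based index `t` of the Dyck word associated to `(a, b)` -/
def wstep (a b : ℕ → Bool) (t : ℕ) : DyckStep :=
  if t % 2 = 0 then (if a (t/2) then D else U) else (if b (t/2) then U else D)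

/-- the length-`k` prefix of the word associated to `(a, b)` -/
def wlist (a b : ℕ → Bool) (k : ℕ) : List DyckStep := List.ofFn (fun j : Fin k => wstep a b j)

lemma wlist_length (k : ℕ) : (wlist a b k).length = k := by simp [wlist]

lemma wlist_succ (k : ℕ) : wlist a b (k+1) = wlist a b k ++ [wstep a b k] := by
  unfold wlist
  rw [List.ofFn_succ']
  simp [List.concat_eq_append]

lemma wlist_count (k : ℕ) :
    (wlist a b k).count U = (k+1)/2 - cnt a ((k+1)/2) + cnt b (k/2) ∧
    (wlist a b k).count D = cnt a ((k+1)/2) + (k/2 - cnt b (k/2)) := by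
  induction k with
  | zero => simp [wlist, cnt]
  | succ k ih =>
    obtain ⟨ihU, ihD⟩ := ih
    rw [wlist_succ, List.count_append, List.count_append, ihU, ihD]
    have hca := cnt_le a ((k+1)/2)
    have hcb := cnt_le b (k/2)
    have hcsa := cnt_succ a ((k+1)/2)
    have hcsb := cnt_succ b (k/2)
    by_cases hk : k % 2 = 0
    · have h1 : (k+1)/2 = k/2 := by omega
      have h2 : (k+1+1)/2 = k/2 + 1 := by omega
      rw [h2, show (k+1)/2 = k/2 by omega]
      rw [h1] at hcsa
      have hstep : wstep a b k = if a (k/2) then D else U := by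
        unfold wstep; rw [if_pos hk]
      rcases Bool.dichotomy (a (k/2)) with ha | ha <;> rw [ha] at hstep hcsa
      · simp at hstep
        have hsU : List.count U [wstep a b k] = 1 := by rw [hstep]; rfl
        have hsD : List.count D [wstep a b k] = 0 := by rw [hstep]; rfl
        rw [hsU, hsD]
        simp at hcsa
        rw [h1] at hca
        constructor <;> omega
      · simp at hstep
        have hsU : List.count U [wstep a b k] = 0 := by rw [hstep]; rfl
        have hsD : List.count D [wstep a b k] = 1 := by rw [hstep]; rfl
        rw [hsU, hsD]
        simp at hcsa
        rw [h1] at hca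
        constructor <;> omega
    · have h1 : (k+1)/2 = k/2 + 1 := by omega
      have h2 : (k+1+1)/2 = k/2 + 1 := by omega
      rw [h2, show (k+1)/2 = k/2 + 1 by omega]
      have hstep : wstep a b k = if b (k/2) then U else D := by
        unfold wstep; rw [if_neg hk]
      rcases Bool.dichotomy (b (k/2)) with hb | hb <;> rw [hb] at hstep hcsb
      · simp at hstep
        have hsU : List.count U [wstep a b k] = 0 := by rw [hstep]; rfl
        have hsD : List.count D [wstep a b k] = 1 := by rw [hstep]; rfl
        rw [hsU, hsD]
        simp at hcsb
        rw [h1] at hca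
        constructor <;> omega
      · simp at hstep
        have hsU : List.count U [wstep a b k] = 1 := by rw [hstep]; rfl
        have hsD : List.count D [wstep a b k] = 0 := by rw [hstep]; rfl
        rw [hsU, hsD]
        simp at hcsb
        rw [h1] at hca
        constructor <;> omega

lemma wlist_take {K k : ℕ} (h : k ≤ K) : (wlist a b K).take k = wlist a b k := by
  induction K with
  | zero =>
    have : k = 0 := by omega
    simp [this, wlist]
  | succ K ih =>
    rcases Nat.lt_or_ge k (K+1) with h' | h'
    · rw [wlist_succ, List.take_append_of_le_length (by rw [wlist_length]; omega)]
      exact ih (by omega)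
    · have : k = K + 1 := by omega
      subst this
      exact List.take_of_length_le (by rw [wlist_length])

end D4

namespace D4
open Finset DyckStep

variable {n : ℕ} {a b : ℕ → Bool}

lemma good_nat (hG : Good n a b) (v : ℕ) (hv : v < 2*n) : cnt a ((v+1)/2) ≤ cnt b (v/2) := by
  by_cases hpar : v % 2 = 1
  · rw [show (v+1)/2 = v/2 + 1 by omega]
    exact hG.2.2.2 _ (by omega)
  · rw [show (v+1)/2 = v/2 by omega]
    exact hG.le _

/-- the Dyck word associated to Good data -/
def wordOf (hG : Good n a b) : DyckWord where
  toList := wlist a b (2*n)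
  count_U_eq_count_D := by
    obtain ⟨hU, hD⟩ := wlist_count (a := a) (b := b) (2*n)
    rw [hU, hD, show (2*n+1)/2 = n by omega, show (2*n)/2 = n by omega]
    have h1 := hG.2.2.1
    have h2 := cnt_le a n
    have h3 := cnt_le b n
    omega
  count_D_le_count_U := by
    intro i
    rcases Nat.lt_or_ge i (2*n) with hi | hi
    · rw [wlist_take (le_of_lt hi)]
      obtain ⟨hU, hD⟩ := wlist_count (a := a) (b := b) i
      rw [hU, hD]
      have h1 := good_nat hG i hi
      have h2 := cnt_le a ((i+1)/2)
      have h3 := cnt_le b (i/2)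
      omega
    · rw [List.take_of_length_le (by rw [wlist_length]; omega)]
      obtain ⟨hU, hD⟩ := wlist_count (a := a) (b := b) (2*n)
      rw [hU, hD, show (2*n+1)/2 = n by omega, show (2*n)/2 = n by omega]
      have h1 := hG.2.2.1
      have h2 := cnt_le a n
      have h3 := cnt_le b n
      omega

lemma wordOf_semilength (hG : Good n a b) : (wordOf hG).semilength = n := by
  unfold DyckWord.semilength wordOf
  obtain ⟨hU, -⟩ := wlist_count (a := a) (b := b) (2*n)
  rw [hU, show (2*n+1)/2 = n by omega, show (2*n)/2 = n by omega]
  have h1 := hG.2.2.1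
  have h2 := cnt_le a n
  have h3 := cnt_le b n
  omega

/-- map from the hub to Dyck words of semilength n -/
def hubToDyck (x : {ab : (ℕ → Bool) × (ℕ → Bool) // Good n ab.1 ab.2}) :
    {p : DyckWord // p.semilength = n} :=
  ⟨wordOf x.2, wordOf_semilength x.2⟩

lemma wstep_eq_of_wlist_eq {a' b' : ℕ → Bool} (h : wlist a b (2*n) = wlist a' b' (2*n))
    {j : ℕ} (hj : j < 2*n) : wstep a b j = wstep a' b' j := by
  have h1 : (wlist a b (2*n))[j]'(by rw [wlist_length]; exact hj)
      = (wlist a' b' (2*n))[j]'(by rw [wlist_length]; exact hj) :=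
    List.getElem_of_eq h _
  unfold wlist at h1
  simpa using h1

lemma hubToDyck_inj : Function.Injective (hubToDyck (n := n)) := by
  rintro ⟨⟨a, b⟩, hG⟩ ⟨⟨a', b'⟩, hG'⟩ heq
  dsimp only at hG hG'
  have hl : wlist a b (2*n) = wlist a' b' (2*n) := by
    have := congrArg (fun x => (x.1 : DyckWord).toList) heq
    exact this
  apply Subtype.ext
  simp only [Prod.mk.injEq]
  constructor
  · funext i
    rcases Nat.lt_or_ge i n with hi | hi
    · have hs := wstep_eq_of_wlist_eq hl (j := 2*i) (by omega)
      have h0 : 2*i % 2 = 0 := by omega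
      unfold wstep at hs
      rw [if_pos h0, if_pos h0, show 2*i/2 = i by omega] at hs
      rcases Bool.dichotomy (a i) with h1 | h1 <;> rcases Bool.dichotomy (a' i) with h2 | h2 <;>
        rw [h1, h2] at hs <;> rw [h1, h2] <;> simp_all
    · rw [hG.1 i hi, hG'.1 i hi]
  · funext i
    rcases Nat.lt_or_ge i n with hi | hi
    · have hs := wstep_eq_of_wlist_eq hl (j := 2*i+1) (by omega)
      have h0 : ¬ ((2*i+1) % 2 = 0) := by omega
      unfold wstep at hs
      rw [if_neg h0, if_neg h0, show (2*i+1)/2 = i by omega] at hs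
      rcases Bool.dichotomy (b i) with h1 | h1 <;> rcases Bool.dichotomy (b' i) with h2 | h2 <;>
        rw [h1, h2] at hs <;> rw [h1, h2] <;> simp_all
    · rw [hG.2.1 i hi, hG'.2.1 i hi]

lemma hubToDyck_surj : Function.Surjective (hubToDyck (n := n)) := by
  rintro ⟨p, hp⟩
  have hlen : p.toList.length = 2*n := by
    rw [← DyckWord.two_mul_semilength_eq_length, hp]
  set a : ℕ → Bool := fun i => if h : 2*i < p.toList.length then
    decide (p.toList.get ⟨2*i, h⟩ = D) else false with ha
  set b : ℕ → Bool := fun i => if h : 2*i+1 < p.toList.length then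
    decide (p.toList.get ⟨2*i+1, h⟩ = U) else false with hb
  have hwl : wlist a b (2*n) = p.toList := by
    apply List.ext_get
    · rw [wlist_length, hlen]
    · intro j h1 h2
      unfold wlist
      simp only [List.get_ofFn]
      rw [wlist_length] at h1
      show wstep a b j = _
      unfold wstep
      by_cases hpar : j % 2 = 0
      · rw [if_pos hpar]
        simp only [ha]
        rw [dif_pos (show 2*(j/2) < p.toList.length by omega)]
        have hge : ∀ (hh : 2*(j/2) < p.toList.length),
            p.toList.get ⟨2*(j/2), hh⟩ = p.toList.get ⟨j, h2⟩ := fun hh =>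
          congrArg p.toList.get (Fin.ext (by simp; omega))
        rw [hge _]
        rcases (p.toList.get ⟨j, h2⟩).dichotomy with h | h <;> rw [h] <;> simp
      · rw [if_neg hpar]
        simp only [hb]
        rw [dif_pos (show 2*(j/2)+1 < p.toList.length by omega)]
        have hge : ∀ (hh : 2*(j/2)+1 < p.toList.length),
            p.toList.get ⟨2*(j/2)+1, hh⟩ = p.toList.get ⟨j, h2⟩ := fun hh =>
          congrArg p.toList.get (Fin.ext (by simp; omega))
        rw [hge _]
        rcases (p.toList.get ⟨j, h2⟩).dichotomy with h | h <;> rw [h] <;> simp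
  -- counts of p in terms of cnt
  have hU : p.toList.count U = n - cnt a n + cnt b n := by
    rw [← hwl]
    obtain ⟨h1, -⟩ := wlist_count (a := a) (b := b) (2*n)
    rw [h1, show (2*n+1)/2 = n by omega, show (2*n)/2 = n by omega]
  have hDc : p.toList.count D = cnt a n + (n - cnt b n) := by
    rw [← hwl]
    obtain ⟨-, h1⟩ := wlist_count (a := a) (b := b) (2*n)
    rw [h1, show (2*n+1)/2 = n by omega, show (2*n)/2 = n by omega]
  have hcnts : cnt a n = cnt b n := by
    have he := p.count_U_eq_count_D
    rw [hU, hDc] at he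
    have h2 := cnt_le a n
    have h3 := cnt_le b n
    omega
  have hG : Good n a b := by
    refine ⟨?_, ?_, hcnts, ?_⟩
    · intro i hi; simp only [ha]; rw [dif_neg (by omega)]
    · intro i hi; simp only [hb]; rw [dif_neg (by omega)]
    · intro i hi
      have hpre := p.count_D_le_count_U (2*i+1)
      rw [← hwl, wlist_take (show 2*i+1 ≤ 2*n by omega)] at hpre
      obtain ⟨h1, h2⟩ := wlist_count (a := a) (b := b) (2*i+1)
      rw [h1, h2, show (2*i+1+1)/2 = i+1 by omega, show (2*i+1)/2 = i by omega] at hpre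
      have h3 := cnt_le a (i+1)
      have h4 := cnt_le b i
      omega
  refine ⟨⟨(a, b), hG⟩, ?_⟩
  unfold hubToDyck
  apply Subtype.ext
  apply DyckWord.ext
  exact hwl

lemma hub_card : Nat.card {ab : (ℕ → Bool) × (ℕ → Bool) // Good n ab.1 ab.2} = catalan n := by
  rw [Nat.card_congr (Equiv.ofBijective _ ⟨hubToDyck_inj, hubToDyck_surj⟩)]
  rw [Nat.card_eq_fintype_card]
  exact DyckWord.card_dyckWord_semilength_eq_catalan n

end D4

theorem stmt_7 (n : ℕ) :
    Nat.card {π : Equiv.Perm (Fin (2 * n)) // IsDumont4 n π ∧ Avoids π p1432} = catalan n ∧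
    Nat.card {π : Equiv.Perm (Fin (2 * n)) // IsDumont4 n π ∧ Avoids π p321} = catalan n := by
  have h321 : Nat.card {π : Equiv.Perm (Fin (2 * n)) // IsDumont4 n π ∧ Avoids π p321}
      = catalan n := by
    rw [Nat.card_congr (D4.permHubEquiv n)]
    exact D4.hub_card
  refine ⟨?_, h321⟩
  rw [Nat.card_congr (Equiv.subtypeEquivRight
    (fun π => and_congr_right fun hD => D4.avoids_iff hD))]
  exact h321
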